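/- Let τ > 0, let σ₀ ∈ ℝ, and let a₁, a₀, α₁, α₀ ∈ ℝ. Then σ₀ is a root of multiplicity exactly 4 of Δ (i.e., Δ(σ₀) = Δ'(σ₀) = Δ''(σ₀) = Δ'''(σ₀) = 0 and Δ⁽⁴⁾(σ₀) ≠ 0) if and only if a₁ = −4/τ − 2σ₀, a₀ = 6/τ² + 4σ₀/τ + σ₀², α₁ = −(2/τ)e^{σ₀τ}, and α₀ = (2/τ)e^{σ₀τ}(σ₀ − 3/τ). -/

import Mathlib

open Complex
open Complex

lemma expLin (T C D : ℂ) (s : ℂ) :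
    HasDerivAt (fun s => Complex.exp (-s*T) * (C*s + D))
      (Complex.exp (-s*T) * ((-T*C)*s + (C - T*D))) s := by
  have h1 : HasDerivAt (fun s : ℂ => -s*T) (-T) s := by
    simpa using ((hasDerivAt_id s).neg.mul_const T)
  have h2 := h1.cexp
  have h3 : HasDerivAt (fun s : ℂ => C*s + D) C s := by
    simpa using ((hasDerivAt_id s).const_mul C).add_const D
  have := h2.mul h3
  refine this.congr_deriv ?_
  ring

lemma d0 (A₁ A₀ B₁ B₀ T : ℂ) (s : ℂ) :
    HasDerivAt (fun s => s ^ 2 + A₁ * s + A₀ + Complex.exp (-s*T) * (B₁*s + B₀))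
      (2*s + A₁ + Complex.exp (-s*T) * ((-T*B₁)*s + (B₁ - T*B₀))) s := by
  have hp : HasDerivAt (fun s : ℂ => s ^ 2 + A₁ * s + A₀) (2*s + A₁) s := by
    have := ((hasDerivAt_pow 2 s).add ((hasDerivAt_id s).const_mul A₁)).add_const A₀
    refine this.congr_deriv ?_
    ring
  exact hp.add (expLin T B₁ B₀ s)

lemma d1 (A₁ B₁ B₀ T : ℂ) (s : ℂ) :
    HasDerivAt (fun s => 2*s + A₁ + Complex.exp (-s*T) * ((-T*B₁)*s + (B₁ - T*B₀)))
      ((2:ℂ) + Complex.exp (-s*T) * ((T^2*B₁)*s + (-2*T*B₁ + T^2*B₀))) s := by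
  have hp : HasDerivAt (fun s : ℂ => 2*s + A₁) (2:ℂ) s := by
    simpa using ((hasDerivAt_id s).const_mul (2:ℂ)).add_const A₁
  have := hp.add (expLin T (-T*B₁) (B₁ - T*B₀) s)
  refine this.congr_deriv ?_
  ring_nf

lemma d2 (B₁ B₀ T : ℂ) (s : ℂ) :
    HasDerivAt (fun s => (2:ℂ) + Complex.exp (-s*T) * ((T^2*B₁)*s + (-2*T*B₁ + T^2*B₀)))
      (Complex.exp (-s*T) * ((-T^3*B₁)*s + (3*T^2*B₁ - T^3*B₀))) s := by
  have := ((expLin T (T^2*B₁) (-2*T*B₁ + T^2*B₀) s).const_add (2:ℂ))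
  refine this.congr_deriv ?_
  ring_nf

lemma d3 (B₁ B₀ T : ℂ) (s : ℂ) :
    HasDerivAt (fun s => Complex.exp (-s*T) * ((-T^3*B₁)*s + (3*T^2*B₁ - T^3*B₀)))
      (Complex.exp (-s*T) * ((T^4*B₁)*s + (-4*T^3*B₁ + T^4*B₀))) s := by
  have := expLin T (-T^3*B₁) (3*T^2*B₁ - T^3*B₀) s
  convert this using 1
  ring_nf

lemma realSystem (τ σ₀ a₁ a₀ α₁ α₀ F : ℝ) (hτ : 0 < τ) (hF : 0 < F)
    (hFE : F * Real.exp (σ₀ * τ) = 1) :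
    (σ₀^2 + a₁*σ₀ + a₀ + F*(α₁*σ₀ + α₀) = 0 ∧
     2*σ₀ + a₁ + F*((-τ*α₁)*σ₀ + (α₁ - τ*α₀)) = 0 ∧
     2 + F*((τ^2*α₁)*σ₀ + (-2*τ*α₁ + τ^2*α₀)) = 0 ∧
     F*((-τ^3*α₁)*σ₀ + (3*τ^2*α₁ - τ^3*α₀)) = 0 ∧
     F*((τ^4*α₁)*σ₀ + (-4*τ^3*α₁ + τ^4*α₀)) ≠ 0)
    ↔ (a₁ = -4 / τ - 2 * σ₀ ∧
       a₀ = 6 / τ ^ 2 + 4 * σ₀ / τ + σ₀ ^ 2 ∧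
       α₁ = -(2 / τ) * Real.exp (σ₀ * τ) ∧
       α₀ = (2 / τ) * Real.exp (σ₀ * τ) * (σ₀ - 3 / τ)) := by
  set E := Real.exp (σ₀ * τ) with hE
  have hτ' : τ ≠ 0 := ne_of_gt hτ
  have hF' : F ≠ 0 := ne_of_gt hF
  have hE1 : E = F⁻¹ := by
    field_simp
    linear_combination hFE
  rw [hE1]
  constructor
  · rintro ⟨h0, h1, h2, h3, h4⟩
    have hX : (-τ^3*α₁)*σ₀ + (3*τ^2*α₁ - τ^3*α₀) = 0 := (mul_eq_zero.mp h3).resolve_left hF'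
    have hq : τ*(α₁*σ₀ + α₀) = 3*α₁ := by
      have h5 : τ^2*(τ*(α₁*σ₀ + α₀) - 3*α₁) = 0 := by linear_combination -hX
      have h6 := (mul_eq_zero.mp h5).resolve_left (pow_ne_zero 2 hτ')
      linarith
    have h2' : 2 + F*(τ*α₁) = 0 := by linear_combination h2 - F*τ*hq
    have hA1 : α₁ = -(2 / τ) * F⁻¹ := by
      field_simp
      linear_combination h2'
    have hA0 : α₀ = (2 / τ) * F⁻¹ * (σ₀ - 3 / τ) := by
      field_simp
      linear_combination τ*F*hq + (3 - σ₀*τ)*h2'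
    have ha1 : a₁ = -4 / τ - 2 * σ₀ := by
      have h1' : 2*σ₀ + a₁ - 2*F*α₁ = 0 := by linear_combination h1 + F*hq
      field_simp
      linear_combination τ*h1' + 2*h2'
    have ha0 : a₀ = 6 / τ ^ 2 + 4 * σ₀ / τ + σ₀ ^ 2 := by
      have h1' : 2*σ₀ + a₁ - 2*F*α₁ = 0 := by linear_combination h1 + F*hq
      have h0' : τ*(σ₀^2 + a₁*σ₀ + a₀) + 3*F*α₁ = 0 := by
        linear_combination τ*h0 - F*hq
      have h1'' : τ*a₁ + 2*σ₀*τ + 4 = 0 := by linear_combination τ*h1' + 2*h2'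
      field_simp
      linear_combination τ*h0' - σ₀*τ*h1'' - 3*h2'
    exact ⟨ha1, ha0, hA1, hA0⟩
  · rintro ⟨ha1, ha0, hA1, hA0⟩
    subst ha1 ha0 hA1 hA0
    refine ⟨?_, ?_, ?_, ?_, ?_⟩
    · field_simp
      ring
    · field_simp
      ring
    · field_simp
      ring
    · field_simp
      ring
    · have : F*((τ^4*(-(2 / τ) * F⁻¹))*σ₀ + (-4*τ^3*(-(2 / τ) * F⁻¹) + τ^4*((2 / τ) * F⁻¹ * (σ₀ - 3 / τ)))) = 2*τ^2 := by
        field_simp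
        ring
      rw [this]
      positivity


/-- For the quasipolynomial Δ(s) = s² + a₁s + a₀ + e^{−sτ}(α₁s + α₀) with
τ > 0, a real number σ₀ is a root of multiplicity exactly 4 of Δ if and only if the
coefficients are given by the stated formulas. -/
theorem real_root_multiplicity_four_iff
    (τ σ₀ a₁ a₀ α₁ α₀ : ℝ) (hτ : 0 < τ)
    (Δ : ℂ → ℂ)
    (hΔ : ∀ s : ℂ, Δ s = s ^ 2 + a₁ * s + a₀ + Complex.exp (-s * τ) * (α₁ * s + α₀)) :
    (Δ σ₀ = 0 ∧ deriv Δ σ₀ = 0 ∧ iteratedDeriv 2 Δ σ₀ = 0 ∧ iteratedDeriv 3 Δ σ₀ = 0 ∧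
      iteratedDeriv 4 Δ σ₀ ≠ 0)
    ↔ (a₁ = -4 / τ - 2 * σ₀ ∧
       a₀ = 6 / τ ^ 2 + 4 * σ₀ / τ + σ₀ ^ 2 ∧
       α₁ = -(2 / τ) * Real.exp (σ₀ * τ) ∧
       α₀ = (2 / τ) * Real.exp (σ₀ * τ) * (σ₀ - 3 / τ)) := by
  have hΔ' : Δ = fun s => s ^ 2 + (a₁:ℂ) * s + (a₀:ℂ) + Complex.exp (-s*(τ:ℂ)) * ((α₁:ℂ)*s + (α₀:ℂ)) :=
    funext hΔ
  have hD1 : deriv Δ = fun s => 2*s + (a₁:ℂ) + Complex.exp (-s*(τ:ℂ)) * ((-(τ:ℂ)*(α₁:ℂ))*s + ((α₁:ℂ) - (τ:ℂ)*(α₀:ℂ))) := by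
    funext s
    rw [hΔ']
    exact (d0 (a₁:ℂ) (a₀:ℂ) (α₁:ℂ) (α₀:ℂ) (τ:ℂ) s).deriv
  have hD2 : deriv (deriv Δ) = fun s => (2:ℂ) + Complex.exp (-s*(τ:ℂ)) * (((τ:ℂ)^2*(α₁:ℂ))*s + (-2*(τ:ℂ)*(α₁:ℂ) + (τ:ℂ)^2*(α₀:ℂ))) := by
    funext s
    rw [hD1]
    exact (d1 (a₁:ℂ) (α₁:ℂ) (α₀:ℂ) (τ:ℂ) s).deriv
  have hD3 : deriv (deriv (deriv Δ)) = fun s => Complex.exp (-s*(τ:ℂ)) * ((-(τ:ℂ)^3*(α₁:ℂ))*s + (3*(τ:ℂ)^2*(α₁:ℂ) - (τ:ℂ)^3*(α₀:ℂ))) := by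
    funext s
    rw [hD2]
    exact (d2 (α₁:ℂ) (α₀:ℂ) (τ:ℂ) s).deriv
  have hD4 : deriv (deriv (deriv (deriv Δ))) = fun s => Complex.exp (-s*(τ:ℂ)) * (((τ:ℂ)^4*(α₁:ℂ))*s + (-4*(τ:ℂ)^3*(α₁:ℂ) + (τ:ℂ)^4*(α₀:ℂ))) := by
    funext s
    rw [hD3]
    exact (d3 (α₁:ℂ) (α₀:ℂ) (τ:ℂ) s).deriv
  have e2 : iteratedDeriv 2 Δ = deriv (deriv Δ) := by
    rw [iteratedDeriv_succ, iteratedDeriv_one]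
  have e3 : iteratedDeriv 3 Δ = deriv (deriv (deriv Δ)) := by
    rw [iteratedDeriv_succ, e2]
  have e4 : iteratedDeriv 4 Δ = deriv (deriv (deriv (deriv Δ))) := by
    rw [iteratedDeriv_succ, e3]
  set F : ℝ := Real.exp (-(σ₀ * τ)) with hF
  have hFpos : 0 < F := Real.exp_pos _
  have hFE : F * Real.exp (σ₀ * τ) = 1 := by
    rw [hF, ← Real.exp_add]
    simp
  have hexp : Complex.exp (-(σ₀:ℂ)*(τ:ℂ)) = (F : ℂ) := by
    rw [hF, Complex.ofReal_exp]
    norm_num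
  rw [e2, e3, e4, hD4, hD3, hD2, hD1, hΔ']
  simp only [hexp]
  rw [← realSystem τ σ₀ a₁ a₀ α₁ α₀ F hτ hFpos hFE]
  constructor
  · rintro ⟨h0, h1, h2, h3, h4⟩
    refine ⟨by exact_mod_cast h0, by exact_mod_cast h1, by exact_mod_cast h2,
      by exact_mod_cast h3, fun hc => h4 (by exact_mod_cast hc)⟩
  · rintro ⟨h0, h1, h2, h3, h4⟩
    refine ⟨by exact_mod_cast h0, by exact_mod_cast h1, by exact_mod_cast h2,
      by exact_mod_cast h3, fun hc => h4 (by exact_mod_cast hc)⟩
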